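/- Let S : [0,∞) → ℝⁿ be absolutely continuous with ⟨S(t), Ṡ(t)⟩ ≤ −η‖S(t)‖ for a.e. t with ‖S(t)‖ > λ, where η, λ > 0. Then the set {‖S‖ ≤ λ} is reached in finite time T ≤ (‖S(0)‖ − λ)/η (when ‖S(0)‖ > λ) and is forward invariant. -/

import Mathlib

open Real RealInnerProductSpace MeasureTheory intervalIntegral
open Set Filter Metric Topology

section Aux
set_option maxHeartbeats 1000000 in
theorem key (n : ℕ) (S S' : ℝ → EuclideanSpace ℝ (Fin n)) (η lam : ℝ)
    (hη : 0 < η) (hlam : 0 < lam)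
    (hloc : ∀ t : ℝ, 0 ≤ t → IntervalIntegrable S' volume 0 t)
    (hAC : ∀ t : ℝ, 0 ≤ t → S t = S 0 + ∫ s in (0:ℝ)..t, S' s)
    (hineq : ∀ᵐ s : ℝ, 0 ≤ s → lam < ‖S s‖ → ⟪S s, S' s⟫ ≤ -η * ‖S s‖)
    (a b : ℝ) (ha : 0 ≤ a) (hab : a ≤ b)
    (hgt : ∀ s ∈ Set.Icc a b, lam < ‖S s‖) :
    ‖S b‖ ≤ ‖S a‖ - η * (b - a) := by
  set M := b + 1 with hMdef
  have hM0 : (0:ℝ) ≤ M := by rw [hMdef]; linarith [ha.trans hab]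
  have hbM : b < M := by rw [hMdef]; linarith
  have hS'M : IntervalIntegrable S' volume 0 M := hloc M hM0
  have hSM : IntegrableOn S' (Icc 0 M) volume :=
    (intervalIntegrable_iff_integrableOn_Icc_of_le hM0).1 hS'M
  set g : ℝ → EuclideanSpace ℝ (Fin n) := (Icc (0:ℝ) M).indicator S' with hgdef
  have hg_int : Integrable g volume := (integrable_indicator_iff measurableSet_Icc).2 hSM
  have hg_eq : ∀ s ∈ Icc (0:ℝ) M, g s = S' s := fun s hs => indicator_of_mem hs S'
  have hIccsub : Icc a b ⊆ Icc (0:ℝ) M := Icc_subset_Icc ha hbM.le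
  have hScont : ContinuousOn S (Icc a b) := by
    have h1 : ContinuousOn (fun t => S 0 + ∫ s in (0:ℝ)..t, S' s) (uIcc (0:ℝ) M) :=
      continuousOn_const.add (continuousOn_primitive_interval' hS'M left_mem_uIcc)
    have h2 := h1.mono (show Icc a b ⊆ uIcc (0:ℝ) M by rw [uIcc_of_le hM0]; exact hIccsub)
    exact h2.congr fun t ht => hAC t (ha.trans ht.1)
  have hVcont : ContinuousOn (fun t => ‖S t‖) (Icc a b) := hScont.norm
  -- Lebesgue points
  have hLeb := IsUnifLocDoublingMeasure.ae_tendsto_average_norm_sub (μ := volume)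
      hg_int.locallyIntegrable 1
  have hQ : ∀ᵐ x : ℝ, Tendsto (fun z => ⨍ y in closedBall ((x+z)/2) ((z-x)/2), ‖g y - g x‖)
      (𝓝[>] x) (𝓝 0) := by
    filter_upwards [hLeb] with x hx
    apply hx (fun z => (x+z)/2) (fun z => (z-x)/2)
    · refine tendsto_nhdsWithin_of_tendsto_nhds_of_eventually_within _ ?_ ?_
      · have h0 : Tendsto (fun z : ℝ => (z - x)/2) (𝓝 x) (𝓝 ((x - x)/2)) :=
          (((continuous_id.sub continuous_const).div_const 2).tendsto x)
        simpa using h0.mono_left nhdsWithin_le_nhds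
      · filter_upwards [self_mem_nhdsWithin] with z hz
        exact div_pos (sub_pos.2 (mem_Ioi.1 hz)) two_pos
    · filter_upwards [self_mem_nhdsWithin] with z hz
      have hxz : x < z := hz
      rw [mem_closedBall, Real.dist_eq, one_mul]
      have he : x - (x+z)/2 = -((z-x)/2) := by ring
      rw [he, abs_neg, abs_of_nonneg (by linarith : (0:ℝ) ≤ (z-x)/2)]
  have hae : ∀ᵐ x : ℝ, (((0:ℝ) ≤ x → lam < ‖S x‖ → ⟪S x, S' x⟫ ≤ -η * ‖S x‖) ∧
      Tendsto (fun z => ⨍ y in closedBall ((x+z)/2) ((z-x)/2), ‖g y - g x‖) (𝓝[>] x) (𝓝 0)) :=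
    hineq.and hQ
  set N : Set ℝ := {x : ℝ | ¬ (((0:ℝ) ≤ x → lam < ‖S x‖ → ⟪S x, S' x⟫ ≤ -η * ‖S x‖) ∧
      Tendsto (fun z => ⨍ y in closedBall ((x+z)/2) ((z-x)/2), ‖g y - g x‖) (𝓝[>] x) (𝓝 0))}
    with hNdef
  have hNμ : volume N = 0 := ae_iff.1 hae
  refine le_of_forall_pos_le_add fun ε hε => ?_
  set h : ℝ → ℝ := fun s => ‖g s‖ + η * (Icc a b).indicator (fun _ => (1:ℝ)) s with hhdef
  have hh_nonneg : ∀ s, 0 ≤ h s := fun s =>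
    add_nonneg (norm_nonneg _) (mul_nonneg hη.le (indicator_nonneg (fun _ _ => zero_le_one) s))
  have hind_int : Integrable ((Icc a b).indicator (fun _ => (1:ℝ))) volume :=
    (integrable_indicator_iff measurableSet_Icc).2
      (integrableOn_const measure_Icc_lt_top.ne)
  have hh_int : Integrable h volume := hg_int.norm.add (hind_int.const_mul η)
  have hfin : (∫⁻ x, ENNReal.ofReal (h x) ∂volume) ≠ ⊤ := by
    have h1 := hasFiniteIntegral_iff_norm h |>.1 hh_int.hasFiniteIntegral
    have h2 : ∀ x, ENNReal.ofReal ‖h x‖ = ENNReal.ofReal (h x) := fun x => by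
      rw [Real.norm_eq_abs, abs_of_nonneg (hh_nonneg x)]
    simp only [h2] at h1
    exact h1.ne
  obtain ⟨δ, hδ0, hδ⟩ := exists_pos_setLIntegral_lt_of_measure_lt hfin
      (show ENNReal.ofReal ε ≠ 0 from (ENNReal.ofReal_pos.2 hε).ne')
  obtain ⟨U, hNU, hUopen, hUμ⟩ := Set.exists_isOpen_lt_of_lt N δ (by rw [hNμ]; exact hδ0)
  set k : ℝ → ℝ := U.indicator h with hkdef
  have hk_int : Integrable k volume := hh_int.indicator hUopen.measurableSet
  have hk_nonneg : ∀ s, 0 ≤ k s := fun s => indicator_nonneg (fun u _ => hh_nonneg u) s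
  set F : ℝ → ℝ := fun t => ∫ s in a..t, k s with hFdef
  have hFcont : Continuous F :=
    intervalIntegral.continuous_primitive (fun c d => hk_int.intervalIntegrable) a
  set H : ℝ → ℝ := fun t => ‖S t‖ + η * t - F t with hHdef
  have hHcont : ContinuousOn H (Icc a b) :=
    (hVcont.add (continuous_const.mul continuous_id).continuousOn).sub hFcont.continuousOn
  have bound : ∀ x ∈ Ico a b, ∀ r, (0:ℝ) < r → ∃ᶠ z in 𝓝[>] x, slope H x z < r := by
    intro x hx r hr
    have hxb : x < b := hx.2
    have hx0 : (0:ℝ) ≤ x := ha.trans hx.1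
    have hxab : x ∈ Icc a b := ⟨hx.1, hx.2.le⟩
    apply Filter.Eventually.frequently
    have hIoc : Ioc x b ∈ 𝓝[>] x := Ioc_mem_nhdsGT_of_mem ⟨le_refl x, hxb⟩
    have hxzI : ∀ z ∈ Ioc x b, IntervalIntegrable S' volume x z := by
      intro z hz
      refine hS'M.mono_set ?_
      rw [uIcc_of_le hz.1.le, uIcc_of_le hM0]
      exact Icc_subset_Icc hx0 (by linarith [hz.2])
    have hSzx : ∀ z ∈ Ioc x b, S z - S x = ∫ s in x..z, S' s := by
      intro z hz
      rw [hAC z (by linarith [hz.1] : (0:ℝ) ≤ z), hAC x hx0]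
      rw [← integral_interval_sub_left (hloc z (by linarith [hz.1])) (hloc x hx0)]
      abel
    have hFzx : ∀ z : ℝ, F z - F x = ∫ s in x..z, k s := by
      intro z
      simp only [hFdef]
      exact integral_interval_sub_left (hk_int.intervalIntegrable)
        (hk_int.intervalIntegrable)
    by_cases hxN : x ∈ N
    · -- bad point: inside the open set U
      obtain ⟨ε', hε'0, hball⟩ := Metric.isOpen_iff.1 hUopen x (hNU hxN)
      have hIoc2 : Ioc x (min b (x + ε'/2)) ∈ 𝓝[>] x :=
        Ioc_mem_nhdsGT_of_mem ⟨le_refl x, lt_min hxb (by linarith)⟩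
      filter_upwards [hIoc2] with z hz
      have hxz : x < z := hz.1
      have hzb : z ≤ b := hz.2.trans (min_le_left _ _)
      have hzIoc : z ∈ Ioc x b := ⟨hxz, hzb⟩
      have hzsub : Icc x z ⊆ U := by
        intro y hy
        apply hball
        rw [mem_ball, Real.dist_eq, abs_of_nonneg (by linarith [hy.1] : (0:ℝ) ≤ y - x)]
        have h5 := hz.2
        have h6 := min_le_right b (x + ε'/2)
        have h7 := hy.2
        linarith
      have hnormle : ‖S z‖ - ‖S x‖ ≤ ∫ s in x..z, ‖S' s‖ := by
        have c1 : ‖S z‖ - ‖S x‖ ≤ ‖S z - S x‖ := norm_sub_norm_le _ _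
        have c2 : ‖S z - S x‖ ≤ ∫ s in x..z, ‖S' s‖ := by
          rw [hSzx z hzIoc]
          exact intervalIntegral.norm_integral_le_integral_norm hxz.le
        linarith
      have hptwise : ∀ s ∈ Icc x z, ‖S' s‖ + η ≤ k s := by
        intro s hs
        have hsU : s ∈ U := hzsub hs
        have hsab : s ∈ Icc a b := ⟨hx.1.trans hs.1, hs.2.trans hzb⟩
        have hs0M : s ∈ Icc (0:ℝ) M := hIccsub hsab
        rw [hkdef, indicator_of_mem hsU, hhdef]
        simp only
        rw [hg_eq s hs0M, indicator_of_mem hsab]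
        simp
      have hstep : (∫ s in x..z, ‖S' s‖) + η * (z - x) ≤ ∫ s in x..z, k s := by
        have hfint : IntervalIntegrable (fun s => ‖S' s‖ + η) volume x z :=
          (hxzI z hzIoc).norm.add intervalIntegrable_const
        have hmono := intervalIntegral.integral_mono_on hxz.le hfint
          hk_int.intervalIntegrable hptwise
        have heq : ∫ s in x..z, (‖S' s‖ + η) = (∫ s in x..z, ‖S' s‖) + η * (z - x) := by
          rw [intervalIntegral.integral_add (hxzI z hzIoc).norm intervalIntegrable_const,
            intervalIntegral.integral_const, smul_eq_mul]
          ring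
        linarith [hmono, heq.symm.le, heq.le]
      have hH : H z - H x ≤ 0 := by
        have hFz := hFzx z
        simp only [hHdef]
        have : (‖S z‖ + η * z - F z) - (‖S x‖ + η * x - F x)
            = (‖S z‖ - ‖S x‖) + η * (z - x) - (F z - F x) := by ring
        rw [this, hFz]
        linarith
      have hsl : slope H x z ≤ 0 := by
        rw [slope_def_field]
        exact div_nonpos_of_nonpos_of_nonneg hH (by linarith)
      linarith
    · -- good point
      have hPx : (((0:ℝ) ≤ x → lam < ‖S x‖ → ⟪S x, S' x⟫ ≤ -η * ‖S x‖) ∧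
          Tendsto (fun z => ⨍ y in closedBall ((x+z)/2) ((z-x)/2), ‖g y - g x‖)
            (𝓝[>] x) (𝓝 0)) := by
        have := hxN
        simp only [hNdef, mem_setOf_eq, not_not] at this
        exact this
      obtain ⟨hP1, hP2⟩ := hPx
      have hVx : lam < ‖S x‖ := hgt x hxab
      have hSxpos : (0:ℝ) < ‖S x‖ := hlam.trans hVx
      have hxinner : ⟪S x, S' x⟫ ≤ -η * ‖S x‖ := hP1 hx0 hVx
      set d : ℝ := ⟪S x, S' x⟫ / ‖S x‖ with hddef
      have hd : d ≤ -η := by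
        rw [hddef, div_le_iff₀ hSxpos]
        linarith
      set q : ℝ → ℝ := fun u => ‖S x‖^2 + (2*⟪S x, S' x⟫)*u + ‖S' x‖^2 * u^2 with hqdef
      have hq0 : q 0 = ‖S x‖^2 := by simp [hqdef]
      have hqd : HasDerivAt q (2*⟪S x, S' x⟫) 0 := by
        have h1 : HasDerivAt (fun u : ℝ => ‖S x‖^2 + (2*⟪S x, S' x⟫)*u + ‖S' x‖^2 * u^2)
            (0 + (2*⟪S x, S' x⟫) * 1 + ‖S' x‖^2 * (2 * 0^1)) 0 := by
          refine HasDerivAt.add (HasDerivAt.add (hasDerivAt_const _ _) ?_) ?_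
          · simpa using (hasDerivAt_id (0:ℝ)).const_mul (2*⟪S x, S' x⟫)
          · exact (hasDerivAt_pow 2 0).const_mul _
        simpa [hqdef] using h1
      have hnorm_eq : ∀ u : ℝ, ‖S x + u • S' x‖ = Real.sqrt (q u) := by
        intro u
        have e1 : q u = ⟪S x + u • S' x, S x + u • S' x⟫ := by
          rw [real_inner_add_add_self, real_inner_smul_right,
            real_inner_smul_left, real_inner_smul_right,
            real_inner_self_eq_norm_sq, real_inner_self_eq_norm_sq, hqdef]
          ring
        rw [e1, real_inner_self_eq_norm_sq, Real.sqrt_sq (norm_nonneg _)]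
      have hφd : HasDerivAt (fun u : ℝ => ‖S x + u • S' x‖) d 0 := by
        have h1 := hqd.sqrt (by rw [hq0]; positivity)
        have h2 : (2*⟪S x, S' x⟫) / (2 * Real.sqrt (q 0)) = d := by
          rw [hq0, Real.sqrt_sq (norm_nonneg _), hddef]
          ring
        rw [h2] at h1
        have h3 : (fun u : ℝ => Real.sqrt (q u)) = fun u : ℝ => ‖S x + u • S' x‖ :=
          funext fun u => (hnorm_eq u).symm
        rwa [h3] at h1
      have hslope : Tendsto (fun z => (‖S x + (z - x) • S' x‖ - ‖S x‖) / (z - x))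
          (𝓝[>] x) (𝓝 d) := by
        have h1 : Tendsto (slope (fun u : ℝ => ‖S x + u • S' x‖) 0) (𝓝[≠] 0) (𝓝 d) :=
          hasDerivAt_iff_tendsto_slope.1 hφd
        have h2 : Tendsto (fun z : ℝ => z - x) (𝓝[>] x) (𝓝[≠] (0:ℝ)) := by
          refine Tendsto.mono_right ?_ (nhdsWithin_mono 0 (fun y hy => ne_of_gt hy))
          refine tendsto_nhdsWithin_of_tendsto_nhds_of_eventually_within _ ?_ ?_
          · have h0 : Tendsto (fun z : ℝ => z - x) (𝓝 x) (𝓝 (x - x)) :=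
              (continuous_id.sub continuous_const).tendsto x
            simpa using h0.mono_left nhdsWithin_le_nhds
          · filter_upwards [self_mem_nhdsWithin] with z hz
            exact sub_pos.2 (mem_Ioi.1 hz)
        have h3 := h1.comp h2
        refine h3.congr fun z => ?_
        simp [slope_def_field]
      have ev1 := hslope.eventually_lt_const (show d < d + r/3 by linarith)
      have ev2 := hP2.eventually_lt_const (show (0:ℝ) < r/3 by linarith)
      filter_upwards [ev1, ev2, hIoc] with z h1 h2 hz
      have hxz : x < z := hz.1
      have hzx : (0:ℝ) < z - x := by linarith
      have hzb : z ≤ b := hz.2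
      have hR : ‖S z - S x - (z - x) • S' x‖ ≤ ∫ s in x..z, ‖S' s - S' x‖ := by
        have e : S z - S x - (z-x) • S' x = ∫ s in x..z, (S' s - S' x) := by
          rw [intervalIntegral.integral_sub (hxzI z hz) intervalIntegrable_const,
            intervalIntegral.integral_const, ← hSzx z hz]
        rw [e]
        exact intervalIntegral.norm_integral_le_integral_norm hxz.le
      have hIccxz : Icc x z ⊆ Icc (0:ℝ) M := Icc_subset_Icc hx0 (by linarith)
      have havg : ∫ s in x..z, ‖S' s - S' x‖
          = (z - x) * ⨍ y in closedBall ((x+z)/2) ((z-x)/2), ‖g y - g x‖ := by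
        have hballeq : closedBall ((x+z)/2) ((z-x)/2) = Icc x z := by
          rw [Real.closedBall_eq_Icc]
          congr 1 <;> ring
        rw [hballeq, setAverage_eq]
        have hcong : EqOn (fun s => ‖S' s - S' x‖) (fun y => ‖g y - g x‖) (Icc x z) := by
          intro s hs
          simp only
          rw [hg_eq s (hIccxz hs), hg_eq x (hIccxz ⟨le_refl x, hxz.le⟩)]
        rw [intervalIntegral.integral_of_le hxz.le, ← integral_Icc_eq_integral_Ioc,
          setIntegral_congr_fun measurableSet_Icc hcong, Real.volume_real_Icc_of_le hxz.le,
          smul_eq_mul]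
        field_simp
      have htri : ‖S z‖ - ‖S x‖ ≤ (‖S x + (z-x) • S' x‖ - ‖S x‖) + ∫ s in x..z, ‖S' s - S' x‖ := by
        have c1 := norm_add_le (S x + (z-x) • S' x) (S z - S x - (z-x) • S' x)
        have e : (S x + (z-x) • S' x) + (S z - S x - (z-x) • S' x) = S z := by abel
        rw [e] at c1
        linarith
      have hFpos : 0 ≤ F z - F x := by
        rw [hFzx z]
        exact intervalIntegral.integral_nonneg hxz.le (fun u _ => hk_nonneg u)
      have hq1 : ‖S x + (z-x) • S' x‖ - ‖S x‖ < (d + r/3) * (z - x) := by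
        rwa [div_lt_iff₀ hzx] at h1
      have hq2 : ∫ s in x..z, ‖S' s - S' x‖ ≤ (r/3) * (z - x) := by
        rw [havg]
        have := le_of_lt h2
        nlinarith
      have hHz : H z - H x < r * (z - x) := by
        simp only [hHdef]
        have expand : (‖S z‖ + η * z - F z) - (‖S x‖ + η * x - F x)
            = (‖S z‖ - ‖S x‖) + η * (z - x) - (F z - F x) := by ring
        rw [expand]
        nlinarith [htri, hq1, hq2, hFpos, hzx, hr, hd]
      rw [slope_def_field, div_lt_iff₀ hzx]
      exact hHz
  have hmain : H b ≤ H a := by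
    have hcmp := image_le_of_liminf_slope_right_le_deriv_boundary (B := fun _ => H a)
      (B' := fun _ => 0) hHcont le_rfl continuousOn_const
      (fun x _ => hasDerivWithinAt_const x _ (H a)) bound
    exact hcmp (right_mem_Icc.2 hab)
  have hFa : F a = 0 := by simp only [hFdef]; exact integral_same
  have hFb : F b < ε := by
    have e1 : F b = ∫ s in Ioc a b ∩ U, h s := by
      simp only [hFdef, hkdef]
      rw [intervalIntegral.integral_of_le hab]
      exact setIntegral_indicator hUopen.measurableSet
    have hμ : volume (Ioc a b ∩ U) < δ := lt_of_le_of_lt (measure_mono inter_subset_right) hUμ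
    have h3 := hδ _ hμ
    have h4 : ∫ s in Ioc a b ∩ U, h s = (∫⁻ s in Ioc a b ∩ U, ENNReal.ofReal (h s)).toReal :=
      integral_eq_lintegral_of_nonneg_ae (Filter.Eventually.of_forall hh_nonneg |>.filter_mono
        (ae_mono Measure.restrict_le_self)) hh_int.aestronglyMeasurable.restrict
    rw [e1, h4]
    exact (ENNReal.lt_ofReal_iff_toReal_lt (ne_top_of_lt h3)).1 h3
  have hHab : ‖S b‖ + η * b - F b ≤ ‖S a‖ + η * a - F a := hmain
  linarith

end Aux

/-- Boundary-layer (practical) sliding mode: `S` is absolutely continuous on `[0,∞)`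
(expressed via the integral representation with a.e. derivative `S'`), and satisfies
`⟪S t, S' t⟫ ≤ -η ‖S t‖` for a.e. `t ≥ 0` with `‖S t‖ > λ`. Then the boundary layer
`{‖S‖ ≤ λ}` is reached in finite time `T ≤ (‖S 0‖ - λ)/η` and is forward invariant. -/
theorem stmt18 (n : ℕ) (S S' : ℝ → EuclideanSpace ℝ (Fin n)) (η lam : ℝ)
    (hη : 0 < η) (hlam : 0 < lam)
    (hloc : ∀ t : ℝ, 0 ≤ t → IntervalIntegrable S' volume 0 t)
    (hAC : ∀ t : ℝ, 0 ≤ t → S t = S 0 + ∫ s in (0:ℝ)..t, S' s)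
    (hineq : ∀ᵐ s : ℝ, 0 ≤ s → lam < ‖S s‖ → ⟪S s, S' s⟫ ≤ -η * ‖S s‖) :
    (lam < ‖S 0‖ →
      ∃ T : ℝ, 0 ≤ T ∧ T ≤ (‖S 0‖ - lam) / η ∧ ‖S T‖ ≤ lam) ∧
    (∀ t₁ t₂ : ℝ, 0 ≤ t₁ → t₁ ≤ t₂ → ‖S t₁‖ ≤ lam → ‖S t₂‖ ≤ lam) := by
  constructor
  · intro h0
    set T0 := (‖S 0‖ - lam) / η with hT0
    have hT0nn : 0 ≤ T0 := div_nonneg (by linarith) hη.le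
    by_cases hc : ∀ s ∈ Set.Icc (0:ℝ) T0, lam < ‖S s‖
    · have hk := key n S S' η lam hη hlam hloc hAC hineq 0 T0 le_rfl hT0nn hc
      refine ⟨T0, hT0nn, le_rfl, ?_⟩
      have he : η * T0 = ‖S 0‖ - lam := by
        rw [hT0]
        field_simp
      have : η * (T0 - 0) = ‖S 0‖ - lam := by rw [sub_zero]; exact he
      linarith
    · push_neg at hc
      obtain ⟨T, hT, hTle⟩ := hc
      exact ⟨T, hT.1, hT.2, hTle⟩
  · intro t₁ t₂ ht₁ h12 hle
    by_contra hcon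
    push_neg at hcon
    have h2nn : (0:ℝ) ≤ t₂ := ht₁.trans h12
    have hScont : ContinuousOn (fun t => ‖S t‖) (Set.Icc t₁ t₂) := by
      have hS'I : IntervalIntegrable S' volume 0 t₂ := hloc t₂ h2nn
      have h1 : ContinuousOn (fun t => S 0 + ∫ s in (0:ℝ)..t, S' s) (Set.uIcc (0:ℝ) t₂) :=
        continuousOn_const.add (continuousOn_primitive_interval' hS'I Set.left_mem_uIcc)
      have h2 := h1.mono (show Set.Icc t₁ t₂ ⊆ Set.uIcc (0:ℝ) t₂ by
        rw [Set.uIcc_of_le h2nn]; exact Set.Icc_subset_Icc ht₁ le_rfl)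
      exact (h2.congr fun t ht => hAC t (ht₁.trans ht.1)).norm
    set C := Set.Icc t₁ t₂ ∩ (fun t => ‖S t‖) ⁻¹' Set.Iic lam with hC
    have hC1 : t₁ ∈ C := ⟨Set.left_mem_Icc.2 h12, hle⟩
    have hCc : IsClosed C :=
      hScont.preimage_isClosed_of_isClosed isClosed_Icc isClosed_Iic
    have hCcpt : IsCompact C :=
      isCompact_Icc.of_isClosed_subset hCc Set.inter_subset_left
    set c := sSup C with hcdef
    have hcC : c ∈ C := hCcpt.sSup_mem ⟨t₁, hC1⟩
    have hc2 : c < t₂ := by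
      rcases lt_or_eq_of_le hcC.1.2 with h | h
      · exact h
      · exfalso
        have := hcC.2
        rw [h] at this
        exact absurd this (not_le.2 hcon)
    have hgt' : ∀ s, c < s → s ≤ t₂ → lam < ‖S s‖ := by
      intro s hs1 hs2
      by_contra hns
      push_neg at hns
      have hsC : s ∈ C := ⟨⟨hcC.1.1.trans hs1.le, hs2⟩, hns⟩
      exact absurd (le_csSup hCcpt.bddAbove hsC) (not_le.2 hs1)
    have hccl : ContinuousWithinAt (fun t => ‖S t‖) (Set.Icc t₁ t₂) c := hScont c hcC.1
    have hlt : ∀ᶠ s in 𝓝[Set.Ioc c t₂] c, ‖S s‖ < ‖S t₂‖ := by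
      have h1 : ∀ᶠ s in 𝓝[Set.Icc t₁ t₂] c, ‖S s‖ < ‖S t₂‖ :=
        hccl.eventually_lt_const (lt_of_le_of_lt hcC.2 hcon)
      exact h1.filter_mono (nhdsWithin_mono c (fun s hs => Set.mem_Icc.2 ⟨hcC.1.1.trans (Set.mem_Ioc.1 hs).1.le, (Set.mem_Ioc.1 hs).2⟩))
    have hne : (𝓝[Set.Ioc c t₂] c).NeBot := by
      apply mem_closure_iff_nhdsWithin_neBot.1
      rw [closure_Ioc (ne_of_lt hc2)]
      exact Set.left_mem_Icc.2 hc2.le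
    obtain ⟨a2, ha2lt, ha2mem⟩ := (hlt.and eventually_mem_nhdsWithin).exists
    have hge : ∀ s ∈ Set.Icc a2 t₂, lam < ‖S s‖ := fun s hs =>
      hgt' s (lt_of_lt_of_le ha2mem.1 hs.1) hs.2
    have ha2nn : (0:ℝ) ≤ a2 := le_trans ht₁ (le_trans hcC.1.1 ha2mem.1.le)
    have hk := key n S S' η lam hη hlam hloc hAC hineq a2 t₂ ha2nn ha2mem.2 hge
    nlinarith [mul_nonneg hη.le (sub_nonneg.2 ha2mem.2)]
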